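/- The maps Λ ↦ Λ* (where Λ*(x,i) = Λ(x)Λ(a)^i) and Γ ↦ Γ_G (restriction via x ↦ (x,0)) are mutually inverse bijections between the set of representations of the n-ary group (G,f) of degree m and the set of ordinary representations of the Post cover G*_a of degree m. -/

import Mathlib

/-- An `n`-ary (polyadic) group: a set `G` with an `n`-ary operation `f`
(encoded on lists; only values on lists of length `n` are relevant) which is
associative and uniquely solvable in every position. -/
structure PolyadicGroup (n : ℕ) (G : Type*) where
  f : List G → G
  assoc : ∀ u v w u' v' w' : List G,
    v.length = n → v'.length = n →
    u.length + w.length = n - 1 → u'.length + w'.length = n - 1 →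
    u ++ v ++ w = u' ++ v' ++ w' →
    f (u ++ f v :: w) = f (u' ++ f v' :: w')
  solv : ∀ (u w : List G) (b : G), u.length + w.length = n - 1 →
    ∃! z : G, f (u ++ z :: w) = b

/-- The skew element `x̄` of `x`: the unique `z` with `f(x,...,x,z) = x`
(`x` repeated `n-1` times). -/
noncomputable def PolyadicGroup.skew {n : ℕ} {G : Type*} (P : PolyadicGroup n G)
    (x : G) : G :=
  (P.solv (List.replicate (n - 1) x) [] x (by simp)).choose

/-- `f_*`: apply `f` once (length `n`) or twice (length `2n-1`). -/
def PolyadicGroup.fstar {n : ℕ} {G : Type*} (P : PolyadicGroup n G)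
    (l : List G) : G :=
  if l.length = n then P.f l else P.f (P.f (l.take n) :: l.drop n)

/-- The Post cover multiplication on `G × ℤ_{n-1}`:
`(x,i)·(y,j) = (f_*(x, a^(i), y, a^(j), ā, a^(n-2-i*j)), i*j)` with
`i*j ≡ i+j+1 (mod n-1)`. -/
noncomputable def postMul {n : ℕ} {G : Type*} (P : PolyadicGroup n G) (a : G)
    (p q : G × ZMod (n - 1)) : G × ZMod (n - 1) :=
  (P.fstar (p.1 :: (List.replicate p.2.val a ++ q.1 ::
      (List.replicate q.2.val a ++ P.skew a ::
        List.replicate (n - 2 - (p.2 + q.2 + 1).val) a))),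
    p.2 + q.2 + 1)

/-- A degree-`m` representation of the n-ary group `(G, f)`:
`Λ(f(x_1,...,x_n)) = Λ(x_1)⋯Λ(x_n)`. -/
def IsNaryRep {n : ℕ} {G : Type*} (P : PolyadicGroup n G) {m : ℕ}
    (Λ : G → Matrix.GeneralLinearGroup (Fin m) ℂ) : Prop :=
  ∀ l : List G, l.length = n → Λ (P.f l) = (l.map Λ).prod

/-- A set of invertible matrices acts irreducibly on `ℂ^m`:
no invariant subspace other than `⊥` and `⊤`. -/
def IsIrredSet {m : ℕ} (T : Set (Matrix.GeneralLinearGroup (Fin m) ℂ)) : Prop :=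
  ∀ W : Submodule ℂ (Fin m → ℂ),
    (∀ g ∈ T, ∀ v ∈ W, Matrix.mulVec (g : Matrix (Fin m) (Fin m) ℂ) v ∈ W) →
    W = ⊥ ∨ W = ⊤

/-- `Λ* : G*_a → GL_m(ℂ)`, `Λ*(x,i) = Λ(x)Λ(a)^i`. -/
noncomputable def starRep (n : ℕ) {G : Type*} {m : ℕ} (a : G)
    (Λ : G → Matrix.GeneralLinearGroup (Fin m) ℂ) :
    G × ZMod (n - 1) → Matrix.GeneralLinearGroup (Fin m) ℂ :=
  fun p => Λ p.1 * (Λ a) ^ p.2.val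

section Aux
variable {n : ℕ} {G : Type*} (P : PolyadicGroup n G) (a : G)

lemma rep_cat (x : G) {A B C : ℕ} (h : A + B = C) :
    List.replicate A x ++ List.replicate B x = List.replicate C x := by
  subst h; exact (List.replicate_add A B x).symm

lemma skew_spec : P.f (List.replicate (n-1) a ++ [P.skew a]) = a :=
  (P.solv (List.replicate (n - 1) a) [] a (by simp)).choose_spec.1

lemma solv_unique (u w : List G) (h : u.length + w.length = n - 1) {y z : G}
    (hyz : P.f (u ++ y :: w) = P.f (u ++ z :: w)) : y = z := by
  obtain ⟨c, hc, hu⟩ := P.solv u w (P.f (u ++ z :: w)) h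
  rw [hu y hyz, hu z rfl]

lemma mid_neutral (hn : 2 ≤ n) : ∀ t, t ≤ n - 1 →
    P.f (List.replicate (n-1-t) a ++ P.skew a :: List.replicate t a) = a := by
  obtain ⟨m, rfl⟩ : ∃ m, n = m + 2 := ⟨n - 2, by omega⟩
  intro t
  induction t with
  | zero => intro _; simpa using skew_spec P a
  | succ t ih =>
    intro ht
    have ih' := ih (by omega)
    -- s = m - t
    have key : P.f ([a] ++ P.f (List.replicate (m-t) a ++ P.skew a :: List.replicate (t+1) a)
          :: List.replicate m a)
        = P.f ([] ++ P.f (List.replicate (m+1-t) a ++ P.skew a :: List.replicate t a)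
          :: List.replicate (m+1) a) := by
      apply P.assoc
      · simp; try omega
      · simp; try omega
      · simp; try omega
      · simp; try omega
      · simp only [List.append_assoc, List.cons_append, List.singleton_append,
          List.nil_append]
        rw [show m + 1 - t = (m - t) + 1 from by omega, List.replicate_succ,
          List.cons_append]
        congr 2
        rw [rep_cat a (show t + m = t + m from rfl), ← List.replicate_succ,
          rep_cat a (show t + (m + 1) = t + m + 1 by omega)]
    have ih2 : P.f (List.replicate (m+1-t) a ++ P.skew a :: List.replicate t a) = a := ih'
    rw [ih2] at key
    have key2 : P.f ([a] ++ (P.f (List.replicate (m-t) a ++ P.skew a ::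
        List.replicate (t+1) a)) :: List.replicate m a)
        = P.f ([a] ++ a :: List.replicate m a) := by
      rw [key]; congr 1
    have h3 := solv_unique P [a] (List.replicate m a) (by simp; omega) key2
    rw [show m + 2 - 1 - (t+1) = m - t from by omega]
    exact h3

end Aux

section Aux2
variable {n : ℕ} {G : Type*} (P : PolyadicGroup n G) (a : G)

lemma left_neutral (hn : 2 ≤ n) (x : G) {s : ℕ} (hs : s ≤ n - 2) :
    P.f (x :: (List.replicate s a ++ P.skew a :: List.replicate (n-2-s) a)) = x := by
  obtain ⟨m, rfl⟩ : ∃ m, n = m + 2 := ⟨n - 2, by omega⟩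
  have hs' : s ≤ m := by omega
  have hc := mid_neutral P a hn (m + 1 - s) (by omega)
  rw [show m + 2 - 1 - (m+1-s) = s from by omega] at hc
  have key : P.f ([] ++ P.f (x :: (List.replicate s a ++ P.skew a ::
        List.replicate (m-s) a)) :: List.replicate (m+1) a)
      = P.f ([x] ++ P.f (List.replicate s a ++ P.skew a ::
        List.replicate (m+1-s) a) :: List.replicate m a) := by
    apply P.assoc
    · simp; try omega
    · simp; try omega
    · simp; try omega
    · simp; try omega
    · simp only [List.append_assoc, List.cons_append, List.singleton_append,
        List.nil_append]
      congr 3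
      rw [rep_cat a (show (m - s) + (m + 1) = (m - s) + (m + 1) from rfl),
        rep_cat a (show (m + 1 - s) + m = (m - s) + (m + 1) from by omega)]
  rw [hc] at key
  have key2 : P.f ([] ++ P.f (x :: (List.replicate s a ++ P.skew a ::
        List.replicate (m-s) a)) :: List.replicate (m+1) a)
      = P.f ([] ++ x :: List.replicate (m+1) a) := by
    rw [key]; congr 1
  have h4 := solv_unique P [] (List.replicate (m+1) a) (by simp) key2
  rw [show m + 2 - 2 - s = m - s from by omega]
  exact h4

lemma right_neutral (hn : 2 ≤ n) (x : G) :
    P.f (P.skew a :: (List.replicate (n-2) a ++ [x])) = x := by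
  obtain ⟨m, rfl⟩ : ∃ m, n = m + 2 := ⟨n - 2, by omega⟩
  have key : P.f (List.replicate (m+1) a ++ P.f (P.skew a ::
        (List.replicate m a ++ [x])) :: [])
      = P.f ([] ++ P.f (List.replicate (m+1) a ++ [P.skew a]) ::
        (List.replicate m a ++ [x])) := by
    apply P.assoc
    · simp; try omega
    · simp; try omega
    · simp; try omega
    · simp; try omega
    · simp
  have hsk : P.f (List.replicate (m+1) a ++ [P.skew a]) = a := skew_spec P a
  rw [hsk] at key
  have key2 : P.f (List.replicate (m+1) a ++ P.f (P.skew a ::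
        (List.replicate m a ++ [x])) :: [])
      = P.f (List.replicate (m+1) a ++ x :: []) := by
    rw [key]; congr 1
  have h4 := solv_unique P (List.replicate (m+1) a) [] (by simp) key2
  exact h4

end Aux2

section Part1
variable {n : ℕ} {G : Type*} (P : PolyadicGroup n G) (a : G) {m : ℕ}
  (Λ : G → Matrix.GeneralLinearGroup (Fin m) ℂ)

lemma fstar_rep (hn : 2 ≤ n) (hΛ : IsNaryRep P Λ) (L : List G)
    (hL : L.length = n ∨ L.length = 2*n - 1) :
    Λ (P.fstar L) = (L.map Λ).prod := by
  rcases hL with h | h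
  · rw [PolyadicGroup.fstar, if_pos h, hΛ L h]
  · rw [PolyadicGroup.fstar, if_neg (by omega)]
    rw [hΛ _ (by simp; omega)]
    simp only [List.map_cons, List.prod_cons]
    rw [hΛ _ (by simp [List.length_take]; omega)]
    rw [← List.prod_append, ← List.map_append, List.take_append_drop]

lemma skew_rep (hn : 2 ≤ n) (hΛ : IsNaryRep P Λ) :
    Λ (P.skew a) = ((Λ a) ^ (n-2))⁻¹ := by
  obtain ⟨M, rfl⟩ : ∃ M, n = M + 2 := ⟨n - 2, by omega⟩
  have h := skew_spec P a
  have h2 := hΛ (List.replicate (M+2-1) a ++ [P.skew a]) (by simp)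
  rw [h] at h2
  simp only [List.map_append, List.map_replicate, List.map_singleton,
    List.prod_append, List.prod_replicate, List.prod_singleton] at h2
  have h3 : (Λ a) ^ (M + 2 - 1) = Λ a * (Λ a) ^ M := by
    rw [show M + 2 - 1 = M + 1 from rfl, pow_succ']
  rw [h3, mul_assoc] at h2
  have h4 : (Λ a) ^ M * Λ (P.skew a) = 1 :=
    (mul_left_cancel (a := Λ a) (by rw [← h2, mul_one])).symm
  rw [show M + 2 - 2 = M from rfl]
  exact eq_inv_of_mul_eq_one_right h4

lemma val_add_one (hn : 2 ≤ n) (x y : ZMod (n-1)) :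
    (x + y + 1).val = (x.val + y.val + 1) % (n - 1) := by
  haveI : NeZero (n-1) := ⟨by omega⟩
  have hx : ((x.val : ℕ) : ZMod (n-1)) = x := ZMod.natCast_rightInverse x
  have hy : ((y.val : ℕ) : ZMod (n-1)) = y := ZMod.natCast_rightInverse y
  have hxy : x + y + 1 = ((x.val + y.val + 1 : ℕ) : ZMod (n-1)) := by
    push_cast [hx, hy]; ring
  rw [hxy, ZMod.val_natCast]

lemma part1_hom (hn : 2 ≤ n) (hΛ : IsNaryRep P Λ) (p q : G × ZMod (n - 1)) :
    starRep n a Λ (postMul P a p q) = starRep n a Λ p * starRep n a Λ q := by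
  haveI : NeZero (n-1) := ⟨by omega⟩
  have hi : p.2.val < n - 1 := ZMod.val_lt p.2
  have hj : q.2.val < n - 1 := ZMod.val_lt q.2
  set i := p.2.val with hidef
  set j := q.2.val with hjdef
  have hk : (p.2 + q.2 + 1).val = (i + j + 1) % (n - 1) := val_add_one hn p.2 q.2
  set k := (p.2 + q.2 + 1).val with hkdef
  have hkn : k ≤ n - 2 := by have := hk ▸ Nat.mod_lt (i+j+1) (y := n-1) (by omega); omega
  set L := (p.1 :: (List.replicate i a ++ q.1 ::
      (List.replicate j a ++ P.skew a ::
        List.replicate (n - 2 - k) a))) with hLdef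
  have hLlen : L.length = n ∨ L.length = 2*n - 1 := by
    have hLl : L.length = 1 + i + 1 + j + 1 + (n - 2 - k) := by simp [hLdef]; omega
    rcases Nat.lt_or_ge (i + j + 1) (n-1) with hc | hc
    · left; rw [hLl]; rw [Nat.mod_eq_of_lt hc] at hk; omega
    · right; rw [hLl]
      rw [Nat.mod_eq_sub_mod hc, Nat.mod_eq_of_lt (by omega)] at hk; omega
  have hfst : Λ (P.fstar L) = (L.map Λ).prod := fstar_rep P Λ hn hΛ L hLlen
  show Λ (P.fstar L) * (Λ a) ^ k = (Λ p.1 * (Λ a)^i) * (Λ q.1 * (Λ a)^j)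
  rw [hfst, hLdef]
  simp only [List.map_cons, List.map_append, List.map_replicate, List.prod_cons,
    List.prod_append, List.prod_replicate]
  rw [skew_rep P a Λ hn hΛ]
  simp only [mul_assoc]
  rw [← pow_add, show n - 2 - k + k = n - 2 from by omega]
  simp [mul_assoc]

lemma part1_restrict (hn : 2 ≤ n) (x : G) : starRep n a Λ (x, 0) = Λ x := by
  haveI : NeZero (n-1) := ⟨by omega⟩
  simp [starRep]

end Part1

section Part2
variable {n : ℕ} {G : Type*} (P : PolyadicGroup n G) (a : G) {m : ℕ}
  (Γ : G × ZMod (n - 1) → Matrix.GeneralLinearGroup (Fin m) ℂ)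

lemma fstar_eq_f {L : List G} (hL : L.length = n) : P.fstar L = P.f L := by
  rw [PolyadicGroup.fstar, if_pos hL]

lemma fstar_append (hn : 2 ≤ n) (A B : List G) (hA : A.length = n) (hB : B ≠ []) :
    P.fstar (A ++ B) = P.f (P.f A :: B) := by
  rw [PolyadicGroup.fstar, if_neg (by simp [hA]; intro h; exact hB h),
    List.take_left' hA, List.drop_left' hA]

lemma postMul_step (hn : 2 ≤ n) (x : G) (i : ZMod (n-1)) (hi : i.val < n - 2) :
    postMul P a (x, i) (a, (0 : ZMod (n-1))) = (x, i + 1) := by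
  haveI : NeZero (n-1) := ⟨by omega⟩
  have hk : (i + 1).val = i.val + 1 := by
    have h := val_add_one hn i 0
    simpa [Nat.mod_eq_of_lt (show i.val + 0 + 1 < n - 1 by omega)] using h
  unfold postMul
  simp only [ZMod.val_zero, List.replicate_zero, List.nil_append, add_zero, hk]
  refine Prod.ext ?_ rfl
  show P.fstar (x :: (List.replicate i.val a ++ a :: P.skew a ::
      List.replicate (n - 2 - (i.val + 1)) a)) = x
  have hlist : (x :: (List.replicate i.val a ++ a :: P.skew a ::
      List.replicate (n - 2 - (i.val + 1)) a))
      = x :: (List.replicate (i.val + 1) a ++ P.skew a ::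
      List.replicate (n - 2 - (i.val + 1)) a) := by
    rw [List.replicate_succ', List.append_assoc]; rfl
  rw [hlist, fstar_eq_f P (by simp; omega)]
  exact left_neutral P a hn x (by omega)

lemma part2_pow (hn : 2 ≤ n)
    (hΓ : ∀ p q, Γ (postMul P a p q) = Γ p * Γ q) :
    ∀ t, t < n - 1 → ∀ x : G, Γ (x, (t : ZMod (n-1))) = Γ (x, 0) * Γ (a, 0) ^ t := by
  haveI : NeZero (n-1) := ⟨by omega⟩
  intro t
  induction t with
  | zero => intro _ x; simp
  | succ t ih =>
    intro ht x
    have ihx := ih (by omega) x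
    have hval : ((t : ZMod (n-1))).val = t := ZMod.val_cast_of_lt (by omega)
    have hstep := hΓ (x, (t : ZMod (n-1))) (a, 0)
    rw [postMul_step P a hn x _ (by omega)] at hstep
    rw [show ((t+1 : ℕ) : ZMod (n-1)) = (t : ZMod (n-1)) + 1 from by push_cast; ring,
      hstep, ihx, pow_succ, mul_assoc]

lemma part2_star (hn : 2 ≤ n)
    (hΓ : ∀ p q, Γ (postMul P a p q) = Γ p * Γ q) (p : G × ZMod (n-1)) :
    starRep n a (fun x : G => Γ (x, 0)) p = Γ p := by
  haveI : NeZero (n-1) := ⟨by omega⟩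
  have h := part2_pow P a Γ hn hΓ p.2.val (ZMod.val_lt p.2) p.1
  rw [ZMod.natCast_rightInverse p.2] at h
  show Γ (p.1, 0) * Γ (a, 0) ^ p.2.val = Γ p
  rw [← h]

end Part2

section Part2b
variable {n : ℕ} {G : Type*} (P : PolyadicGroup n G) (a : G) {m : ℕ}
  (Γ : G × ZMod (n - 1) → Matrix.GeneralLinearGroup (Fin m) ℂ)

lemma fold_gamma (hΓ : ∀ p q, Γ (postMul P a p q) = Γ p * Γ q) :
    ∀ (ys : List G) (p : G × ZMod (n-1)),
      Γ (List.foldl (fun p x => postMul P a p (x, 0)) p ys)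
        = Γ p * (ys.map (fun x => Γ (x, 0))).prod := by
  intro ys
  induction ys with
  | nil => intro p; simp
  | cons y ys ih =>
    intro p
    simp only [List.foldl_cons, List.map_cons, List.prod_cons]
    rw [ih, hΓ, mul_assoc]

lemma fold_inv (hn : 2 ≤ n) :
    ∀ (ys : List G) (c : List G), ys ≠ [] → 1 ≤ c.length →
      c.length + ys.length = n →
      List.foldl (fun p x => postMul P a p (x, 0))
        (P.f (c ++ P.skew a :: List.replicate (n - 1 - c.length) a),
          ((c.length - 1 : ℕ) : ZMod (n-1))) ys
      = (P.f (c ++ ys), (0 : ZMod (n-1))) := by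
  haveI : NeZero (n-1) := ⟨by omega⟩
  intro ys
  induction ys with
  | nil => intro c h; exact absurd rfl h
  | cons y ys ih =>
    intro c _ hc hlen
    set k := c.length with hkc
    have hk1 : k - 1 < n - 1 := by have := hlen; simp at this; omega
    have hval : (((k - 1 : ℕ) : ZMod (n-1))).val = k - 1 := ZMod.val_cast_of_lt hk1
    set z := P.f (c ++ P.skew a :: List.replicate (n - 1 - k) a) with hz
    have hsnd : (((k - 1 : ℕ) : ZMod (n-1)) + (0 : ZMod (n-1)) + 1)
        = ((k : ℕ) : ZMod (n-1)) := by
      push_cast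
      rw [show ((k - 1 : ℕ) : ZMod (n-1)) = ((k : ℕ) : ZMod (n-1)) - 1 from by
        rw [show k = (k-1) + 1 from by omega]; push_cast; ring]
      ring
    have hvk : (((k - 1 : ℕ) : ZMod (n-1)) + (0 : ZMod (n-1)) + 1).val
        = k % (n - 1) := by
      rw [val_add_one hn, hval, ZMod.val_zero]
      congr 1; omega
    rcases List.eq_nil_or_concat ys with hys | _
    · -- last step: ys = [], c.length = n - 1
      subst hys
      have hkn : k = n - 1 := by simp at hlen; omega
      have hv0 : (((k - 1 : ℕ) : ZMod (n-1)) + (0 : ZMod (n-1)) + 1).val = 0 := by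
        rw [hvk, hkn, Nat.mod_self]
      simp only [List.foldl_cons, List.foldl_nil]
      unfold postMul
      simp only [ZMod.val_zero, List.replicate_zero, List.nil_append, hval, hv0,
        Nat.sub_zero]
      refine Prod.ext ?_ ?_
      · show P.fstar (z :: (List.replicate (k-1) a ++ y :: P.skew a ::
            List.replicate (n - 2) a)) = _
        have hsplit : (z :: (List.replicate (k-1) a ++ y :: P.skew a ::
            List.replicate (n - 2) a))
            = (z :: List.replicate (k-1) a ++ [y]) ++
              (P.skew a :: List.replicate (n - 2) a) := by
          simp
        rw [hsplit, fstar_append P hn _ _ (by simp; omega) (by simp)]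
        have hLN : P.f ((P.f (z :: List.replicate (k-1) a ++ [y])) ::
            (List.replicate 0 a ++ P.skew a :: List.replicate (n-2-0) a))
            = P.f (z :: List.replicate (k-1) a ++ [y]) :=
          left_neutral P a hn _ (by omega)
        simp only [List.replicate_zero, List.nil_append, Nat.sub_zero] at hLN
        rw [hLN]
        -- now f(z :: a^{k-1} ++ [y]) = f(c ++ [y])
        have key : P.f ([] ++ P.f (c ++ [P.skew a]) ::
              (List.replicate (k-1) a ++ [y]))
            = P.f (c ++ P.f (P.skew a :: (List.replicate (n-2) a ++ [y])) :: []) := by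
          apply P.assoc
          · simp; try omega
          · simp; try omega
          · simp; try omega
          · simp; try omega
          · simp; try omega
        rw [right_neutral P a hn y] at key
        have hz' : z = P.f (c ++ [P.skew a]) := by
          rw [hz, hkn]; simp
        rw [hz'] ; rw [show (P.f (c ++ [P.skew a]) :: List.replicate (k-1) a ++ [y])
          = [] ++ P.f (c ++ [P.skew a]) :: (List.replicate (k-1) a ++ [y]) from by simp]
        rw [key]
      · show _ = (0 : ZMod (n-1))
        have := hv0
        rw [hsnd, hkn]
        simpa using ZMod.natCast_self (n-1)
    · -- middle step
      have hys : ys ≠ [] := by rename_i h; rcases h with ⟨l, b, rfl⟩; simp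
      have hkn : k ≤ n - 2 := by
        have : 1 ≤ ys.length := List.length_pos_iff.mpr hys
        simp at hlen; omega
      have hvkk : (((k - 1 : ℕ) : ZMod (n-1)) + (0 : ZMod (n-1)) + 1).val = k := by
        rw [hvk, Nat.mod_eq_of_lt (by omega)]
      simp only [List.foldl_cons]
      have hstep : postMul P a (z, ((k - 1 : ℕ) : ZMod (n-1))) (y, 0)
          = (P.f ((c ++ [y]) ++ P.skew a ::
              List.replicate (n - 1 - (c ++ [y]).length) a),
            (((c ++ [y]).length - 1 : ℕ) : ZMod (n-1))) := by
        unfold postMul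
        simp only [ZMod.val_zero, List.replicate_zero, List.nil_append, hval, hvkk]
        refine Prod.ext ?_ ?_
        · show P.fstar (z :: (List.replicate (k-1) a ++ y :: P.skew a ::
              List.replicate (n - 2 - k) a)) = _
          rw [fstar_eq_f P (by simp; omega)]
          have key : P.f ([] ++ P.f (c ++ P.skew a :: List.replicate (n-1-k) a) ::
                (List.replicate (k-1) a ++ y :: P.skew a :: List.replicate (n-2-k) a))
              = P.f (c ++ P.f (P.skew a :: (List.replicate (n-2) a ++ [y])) ::
                (P.skew a :: List.replicate (n-2-k) a)) := by
            apply P.assoc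
            · simp; try omega
            · simp; try omega
            · simp; try omega
            · simp; try omega
            · simp only [List.append_assoc, List.cons_append, List.singleton_append,
                List.nil_append]
              congr 2
              rw [← List.append_assoc,
                rep_cat a (show (n-1-k) + (k-1) = n - 2 from by omega)]
          rw [right_neutral P a hn y] at key
          simp only [List.nil_append] at key
          rw [← hz] at key
          rw [key]
          congr 1
          simp [show n - 1 - (k+1) = n - 2 - k from by omega]; omega
        · show _ = _
          rw [hsnd, show (c ++ [y]).length = k + 1 from by simp [hkc], Nat.add_sub_cancel]
      rw [hstep, ih (c ++ [y]) hys (by simp) (by simp at hlen ⊢; omega)]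
      simp

end Part2b

/-- `Λ ↦ Λ*` and `Γ ↦ Γ_G` are mutually inverse bijections between the
degree-`m` representations of `(G,f)` and those of the Post cover `G*_a`. -/
theorem star_restriction_inverse {n : ℕ} {G : Type*} (hn : 2 ≤ n)
    (P : PolyadicGroup n G) (a : G) {m : ℕ} :
    (∀ Λ : G → Matrix.GeneralLinearGroup (Fin m) ℂ, IsNaryRep P Λ →
      (∀ p q : G × ZMod (n - 1),
        starRep n a Λ (postMul P a p q) = starRep n a Λ p * starRep n a Λ q) ∧
      (∀ x : G, starRep n a Λ (x, 0) = Λ x)) ∧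
    (∀ Γ : G × ZMod (n - 1) → Matrix.GeneralLinearGroup (Fin m) ℂ,
      (∀ p q : G × ZMod (n - 1), Γ (postMul P a p q) = Γ p * Γ q) →
      IsNaryRep P (fun x : G => Γ (x, 0)) ∧
      (∀ p : G × ZMod (n - 1), starRep n a (fun x : G => Γ (x, 0)) p = Γ p)) := by
  haveI : NeZero (n-1) := ⟨by omega⟩
  constructor
  · intro Λ hΛ
    exact ⟨part1_hom P a Λ hn hΛ, fun x => part1_restrict (n := n) (a := a) (Λ := Λ) hn x⟩
  · intro Γ hΓ
    refine ⟨?_, fun p => part2_star P a Γ hn hΓ p⟩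
    intro l hl
    obtain ⟨x, xs, rfl⟩ : ∃ x xs, l = x :: xs := by
      cases l with
      | nil => simp at hl; omega
      | cons x xs => exact ⟨x, xs, rfl⟩
    have hl' : xs.length + 1 = n := by simpa using hl
    have hxs : xs ≠ [] := by
      intro h; subst h; simp at hl'; omega
    have hfold := fold_inv P a hn xs [x] hxs (by simp) (by simp; omega)
    have hinit : (P.f ([x] ++ P.skew a :: List.replicate (n - 1 - [x].length) a),
        (([x].length - 1 : ℕ) : ZMod (n-1))) = ((x, 0) : G × ZMod (n-1)) := by
      refine Prod.ext ?_ (by simp)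
      show P.f (x :: (P.skew a :: List.replicate (n - 1 - 1) a)) = x
      have := left_neutral P a hn x (s := 0) (by omega)
      simp only [List.replicate_zero, List.nil_append, Nat.sub_zero] at this
      rw [show n - 1 - 1 = n - 2 from by omega]
      exact this
    rw [hinit] at hfold
    have hg := fold_gamma P a Γ hΓ xs (x, 0)
    rw [hfold] at hg
    simpa using hg
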